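/- arXiv:1503.08060 — 2 statements merged into one kernel-verified Lean document; each statement's English description precedes it below -/
import Mathlib

section
/- (One-dimensional Brascamp–Lieb inequality.) Let ψ : ℝ → ℝ be twice continuously differentiable with ψ''(x) > 0 for all x and exp(−ψ) integrable, and let p be the probability measure on ℝ with density proportional to exp(−ψ). Then for every continuously differentiable S : ℝ → ℝ such that S is square-integrable with respect to p and x ↦ S'(x)²/ψ''(x) is p-integrable, one has Var_p(S) ≤ E_p[S'(x)²/ψ''(x)]. -/
open MeasureTheory Real Set Filter Topology
open scoped ENNReal NNReal

noncomputable section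

noncomputable section

namespace BL1D

/-- Cauchy-Schwarz for integrals. -/
lemma cauchy_schwarz {μ : Measure ℝ} {f g : ℝ → ℝ}
    (hfm : AEStronglyMeasurable f μ) (hgm : AEStronglyMeasurable g μ)
    (hf2 : Integrable (fun x => f x ^ 2) μ) (hg2 : Integrable (fun x => g x ^ 2) μ) :
    (∫ x, f x * g x ∂μ) ^ 2 ≤ (∫ x, f x ^ 2 ∂μ) * (∫ x, g x ^ 2 ∂μ) := by
  have hmm : AEStronglyMeasurable (fun x => |f x| * |g x|) μ := by
    refine (hfm.norm.mul hgm.norm).congr (Eventually.of_forall fun x => ?_)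
    simp [Real.norm_eq_abs]
  have hfg : Integrable (fun x => |f x| * |g x|) μ := by
    refine Integrable.mono' ((hf2.add hg2).const_mul (1/2 : ℝ)) hmm ?_
    filter_upwards with x
    have h := abs_nonneg (f x)
    have h2 := abs_nonneg (g x)
    have hn : ‖|f x| * |g x|‖ = |f x| * |g x| := by
      rw [Real.norm_eq_abs, abs_of_nonneg (mul_nonneg h h2)]
    rw [hn]
    simp only [Pi.add_apply]
    nlinarith [sq_nonneg (|f x| - |g x|), sq_abs (f x), sq_abs (g x)]
  have key : ∀ t : ℝ, 0 ≤ (∫ x, g x ^ 2 ∂μ) * (t * t) + (2 * ∫ x, |f x| * |g x| ∂μ) * t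
      + ∫ x, f x ^ 2 ∂μ := by
    intro t
    have h0 : 0 ≤ ∫ x, (|f x| + t * |g x|) ^ 2 ∂μ := integral_nonneg fun x => sq_nonneg _
    have hexp : ∀ x, (|f x| + t * |g x|) ^ 2
        = f x ^ 2 + (2 * t) * (|f x| * |g x|) + (t * t) * g x ^ 2 := by
      intro x
      have h1 : |f x| ^ 2 = f x ^ 2 := sq_abs _
      have h2 : |g x| ^ 2 = g x ^ 2 := sq_abs _
      nlinarith [sq_nonneg (|f x| + t * |g x|)]
    calc (0:ℝ) ≤ ∫ x, (|f x| + t * |g x|) ^ 2 ∂μ := h0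
    _ = ∫ x, (f x ^ 2 + (2 * t) * (|f x| * |g x|) + (t * t) * g x ^ 2) ∂μ := by
        exact integral_congr_ae (Eventually.of_forall hexp)
    _ = (∫ x, f x ^ 2 ∂μ) + (2 * t) * (∫ x, |f x| * |g x| ∂μ) + (t * t) * ∫ x, g x ^ 2 ∂μ := by
        have i1 : Integrable (fun x => f x ^ 2 + 2 * t * (|f x| * |g x|)) μ :=
          hf2.add (hfg.const_mul _)
        have i2 : Integrable (fun x => t * t * g x ^ 2) μ := hg2.const_mul _
        rw [integral_add i1 i2, integral_add hf2 (hfg.const_mul _), integral_const_mul,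
          integral_const_mul]
    _ = (∫ x, g x ^ 2 ∂μ) * (t * t) + (2 * ∫ x, |f x| * |g x| ∂μ) * t + ∫ x, f x ^ 2 ∂μ := by
        ring
  have hd := discrim_le_zero key
  rw [discrim] at hd
  have habs : |∫ x, f x * g x ∂μ| ≤ ∫ x, |f x| * |g x| ∂μ := by
    simpa [Real.norm_eq_abs, abs_mul] using
      norm_integral_le_integral_norm (f := fun x => f x * g x) (μ := μ)
  have h1 : (∫ x, f x * g x ∂μ) ^ 2 ≤ (∫ x, |f x| * |g x| ∂μ) ^ 2 := by
    rw [← sq_abs (∫ x, f x * g x ∂μ)]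
    exact pow_le_pow_left₀ (abs_nonneg _) habs 2
  nlinarith

structure Hyp (ψ T : ℝ → ℝ) : Prop where
  smooth : ContDiff ℝ 2 ψ
  conv : ∀ x, 0 < deriv (deriv ψ) x
  int : Integrable fun x => Real.exp (-ψ x)
  hT : ContDiff ℝ 1 T
  hT2 : Integrable fun x => T x ^ 2 * Real.exp (-ψ x)
  hTd : Integrable fun x => deriv T x ^ 2 / deriv (deriv ψ) x * Real.exp (-ψ x)
  hT0 : (∫ x, T x * Real.exp (-ψ x)) = 0

def hh (ψ T : ℝ → ℝ) (x : ℝ) : ℝ := ∫ t in Iic x, T t * Real.exp (-ψ t)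

variable {ψ T : ℝ → ℝ}

namespace Hyp

lemma cont_rho (hb : Hyp ψ T) : Continuous fun x => Real.exp (-ψ x) :=
  Real.continuous_exp.comp hb.smooth.continuous.neg

lemma cont_erho (hb : Hyp ψ T) : Continuous fun x => Real.exp (ψ x) :=
  Real.continuous_exp.comp hb.smooth.continuous

lemma diff_psi (hb : Hyp ψ T) : Differentiable ℝ ψ := hb.smooth.differentiable two_ne_zero

lemma cd1_dpsi (hb : Hyp ψ T) : ContDiff ℝ 1 (deriv ψ) := by
  have h : ContDiff ℝ ((1 : WithTop ℕ∞) + 1) ψ := by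
    rw [one_add_one_eq_two]; exact hb.smooth
  exact (contDiff_succ_iff_deriv.mp h).2.2

lemma cont_dpsi (hb : Hyp ψ T) : Continuous (deriv ψ) := hb.cd1_dpsi.continuous

lemma diff_dpsi (hb : Hyp ψ T) : Differentiable ℝ (deriv ψ) := hb.cd1_dpsi.differentiable one_ne_zero

lemma cont_ddpsi (hb : Hyp ψ T) : Continuous (deriv (deriv ψ)) := hb.cd1_dpsi.continuous_deriv le_rfl

lemma cont_T (hb : Hyp ψ T) : Continuous T := hb.hT.continuous

lemma diff_T (hb : Hyp ψ T) : Differentiable ℝ T := hb.hT.differentiable one_ne_zero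

lemma cont_dT (hb : Hyp ψ T) : Continuous (deriv T) := hb.hT.continuous_deriv le_rfl

lemma strictMono_dpsi (hb : Hyp ψ T) : StrictMono (deriv ψ) := strictMono_of_deriv_pos hb.conv

lemma integrable_Trho (hb : Hyp ψ T) : Integrable (fun x => T x * Real.exp (-ψ x)) := by
  refine Integrable.mono' (hb.hT2.add hb.int)
    ((hb.cont_T.mul hb.cont_rho).aestronglyMeasurable) ?_
  filter_upwards with x
  have he : (0:ℝ) < Real.exp (-ψ x) := Real.exp_pos _
  have : ‖T x * Real.exp (-ψ x)‖ = |T x| * Real.exp (-ψ x) := by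
    rw [norm_mul, Real.norm_eq_abs, Real.norm_eq_abs, abs_of_pos he]
  rw [this]
  simp only [Pi.add_apply]
  nlinarith [sq_nonneg (|T x| - 1), sq_abs (T x)]

lemma hasDerivAt_hh (hb : Hyp ψ T) (x : ℝ) :
    HasDerivAt (hh ψ T) (T x * Real.exp (-ψ x)) x := by
  have heq : ∀ y : ℝ, hh ψ T y
      = (∫ t in Iic (0:ℝ), T t * Real.exp (-ψ t)) + ∫ t in (0:ℝ)..y, T t * Real.exp (-ψ t) := by
    intro y
    have := intervalIntegral.integral_Iic_sub_Iic (hb.integrable_Trho.integrableOn) (hb.integrable_Trho.integrableOn)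
      (a := 0) (b := y)
    unfold hh
    linarith
  have hd : HasDerivAt (fun y => ∫ t in (0:ℝ)..y, T t * Real.exp (-ψ t))
      (T x * Real.exp (-ψ x)) x := by
    refine intervalIntegral.integral_hasDerivAt_right
      hb.integrable_Trho.intervalIntegrable ?_ ?_
    · exact (hb.cont_T.mul hb.cont_rho).aestronglyMeasurable.stronglyMeasurableAtFilter
    · exact (hb.cont_T.mul hb.cont_rho).continuousAt
  have := hd.const_add (∫ t in Iic (0:ℝ), T t * Real.exp (-ψ t))
  refine this.congr_of_eventuallyEq ?_
  filter_upwards with y using (heq y)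

lemma cont_hh (hb : Hyp ψ T) : Continuous (hh ψ T) :=
  continuous_iff_continuousAt.mpr fun x => (hb.hasDerivAt_hh x).continuousAt

lemma hh_tendsto_atTop (hb : Hyp ψ T) : Tendsto (hh ψ T) atTop (𝓝 0) := by
  have hcov : AECover (volume : Measure ℝ) atTop (fun i : ℝ => Iic i) := aecover_Iic tendsto_id
  have := hcov.integral_tendsto_of_countably_generated hb.integrable_Trho
  rwa [hb.hT0] at this

lemma hh_eq_neg_tail (hb : Hyp ψ T) (x : ℝ) :
    hh ψ T x = -∫ t in Ioi x, T t * Real.exp (-ψ t) := by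
  have := integral_add_compl (measurableSet_Iic (a := x)) hb.integrable_Trho
  rw [compl_Iic, hb.hT0] at this
  unfold hh
  linarith

/-- tail of an integrable function tends to 0 -/
lemma tail_tendsto_zero {f : ℝ → ℝ} (hf : Integrable f) :
    Tendsto (fun x => ∫ t in Ioi x, f t) atTop (𝓝 0) := by
  have hcov : AECover (volume : Measure ℝ) atTop (fun i : ℝ => Iic i) := aecover_Iic tendsto_id
  have h1 := hcov.integral_tendsto_of_countably_generated hf
  have heq : ∀ x : ℝ, ∫ t in Ioi x, f t = (∫ t, f t) - ∫ t in Iic x, f t := by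
    intro x
    have := integral_add_compl (measurableSet_Iic (a := x)) hf
    rw [compl_Iic] at this
    linarith
  simp_rw [heq]
  have := h1.const_sub (∫ t, f t)
  simpa using this

lemma hh_sq_le (hb : Hyp ψ T) (x : ℝ) :
    hh ψ T x ^ 2 ≤ (∫ t in Ioi x, T t ^ 2 * Real.exp (-ψ t)) * ∫ t in Ioi x, Real.exp (-ψ t) := by
  rw [hb.hh_eq_neg_tail, neg_pow]
  have hfg : ∀ t : ℝ, T t * Real.exp (-ψ t)
      = (T t * Real.sqrt (Real.exp (-ψ t))) * Real.sqrt (Real.exp (-ψ t)) := by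
    intro t
    rw [mul_assoc, Real.mul_self_sqrt (Real.exp_pos _).le]
  have hcs := cauchy_schwarz (μ := volume.restrict (Ioi x))
    (f := fun t => T t * Real.sqrt (Real.exp (-ψ t)))
    (g := fun t => Real.sqrt (Real.exp (-ψ t)))
    ((hb.cont_T.mul (hb.cont_rho.sqrt)).aestronglyMeasurable)
    ((hb.cont_rho.sqrt).aestronglyMeasurable) ?_ ?_
  · have e1 : (fun t => (T t * Real.sqrt (Real.exp (-ψ t))) ^ 2)
        = fun t => T t ^ 2 * Real.exp (-ψ t) := by
      funext t
      rw [mul_pow, Real.sq_sqrt (Real.exp_pos _).le]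
    have e2 : (fun t => (Real.sqrt (Real.exp (-ψ t))) ^ 2) = fun t => Real.exp (-ψ t) := by
      funext t
      rw [Real.sq_sqrt (Real.exp_pos _).le]
    rw [e1, e2] at hcs
    simp_rw [← hfg] at hcs
    simpa using hcs
  · have e1 : (fun t => (T t * Real.sqrt (Real.exp (-ψ t))) ^ 2)
        = fun t => T t ^ 2 * Real.exp (-ψ t) := by
      funext t
      rw [mul_pow, Real.sq_sqrt (Real.exp_pos _).le]
    rw [e1]
    exact hb.hT2.integrableOn
  · have e2 : (fun t => (Real.sqrt (Real.exp (-ψ t))) ^ 2) = fun t => Real.exp (-ψ t) := by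
      funext t
      rw [sq, Real.mul_self_sqrt (Real.exp_pos _).le]
    rw [e2]
    exact hb.int.integrableOn

lemma exists_dpsi_pos (hb : Hyp ψ T) : ∃ x0, 0 < deriv ψ x0 := by
  by_contra hcon
  push_neg at hcon
  have hanti : Antitone ψ := antitone_of_deriv_nonpos hb.diff_psi hcon
  have hconst : Integrable (fun _ : ℝ => Real.exp (-ψ 0)) (volume.restrict (Ici (0:ℝ))) := by
    refine Integrable.mono' hb.int.integrableOn aestronglyMeasurable_const ?_
    filter_upwards [ae_restrict_mem measurableSet_Ici] with x hx
    rw [Real.norm_eq_abs, abs_of_pos (Real.exp_pos _), Real.exp_le_exp]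
    exact neg_le_neg (hanti hx)
  rw [integrable_const_iff] at hconst
  rcases hconst with h | h
  · exact absurd h (ne_of_gt (Real.exp_pos _))
  · rw [isFiniteMeasure_restrict, Real.volume_Ici] at h
    exact absurd h (by simp)

lemma tail_rho_le (hb : Hyp ψ T) {x0 x : ℝ} (h0 : 0 < deriv ψ x0) (hx : x0 ≤ x) :
    ∫ t in Ioi x, Real.exp (-ψ t) ≤ Real.exp (-ψ x) / deriv ψ x := by
  have hpx : 0 < deriv ψ x := lt_of_lt_of_le h0 (hb.strictMono_dpsi.monotone hx)
  have hder : ∀ t : ℝ, HasDerivAt (fun y => -Real.exp (-ψ y))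
      (deriv ψ t * Real.exp (-ψ t)) t := by
    intro t
    have h1 : HasDerivAt ψ (deriv ψ t) t := (hb.diff_psi t).hasDerivAt
    have h2 := (h1.fun_neg.exp).fun_neg
    refine h2.congr_deriv ?_
    ring
  have hcont : Continuous fun t => deriv ψ t * Real.exp (-ψ t) := hb.cont_dpsi.mul hb.cont_rho
  have hftc : ∀ y, x ≤ y → ∫ t in x..y, deriv ψ t * Real.exp (-ψ t)
      = Real.exp (-ψ x) - Real.exp (-ψ y) := by
    intro y hy
    have := intervalIntegral.integral_eq_sub_of_hasDerivAt
      (f := fun y => -Real.exp (-ψ y)) (fun t _ => hder t)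
      (hcont.intervalIntegrable x y)
    rw [this]
    ring
  have hbound : ∀ y, x ≤ y → ∫ t in x..y, deriv ψ t * Real.exp (-ψ t) ≤ Real.exp (-ψ x) := by
    intro y hy
    rw [hftc y hy]
    have := Real.exp_pos (-ψ y)
    linarith
  have hIon : IntegrableOn (fun t => deriv ψ t * Real.exp (-ψ t)) (Ioi x) := by
    refine integrableOn_Ioi_of_intervalIntegral_norm_bounded (Real.exp (-ψ x)) x
      (fun i : ℝ => hcont.integrableOn_Ioc) tendsto_id ?_
    filter_upwards [eventually_ge_atTop x] with i hi
    have heq : ∫ t in x..i, ‖deriv ψ t * Real.exp (-ψ t)‖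
        = ∫ t in x..i, deriv ψ t * Real.exp (-ψ t) := by
      refine intervalIntegral.integral_congr fun t ht => ?_
      rw [uIcc_of_le hi] at ht
      have hpt : 0 < deriv ψ t := lt_of_lt_of_le hpx
        (hb.strictMono_dpsi.monotone ht.1)
      rw [Real.norm_eq_abs, abs_of_pos (mul_pos hpt (Real.exp_pos _))]
    simp only [id_eq]
    rw [heq]
    exact hbound i hi
  have htail : ∫ t in Ioi x, deriv ψ t * Real.exp (-ψ t) ≤ Real.exp (-ψ x) := by
    have hlim := intervalIntegral_tendsto_integral_Ioi x hIon tendsto_id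
    refine le_of_tendsto hlim ?_
    filter_upwards [eventually_ge_atTop x] with i hi using hbound i hi
  have hmono : ∫ t in Ioi x, Real.exp (-ψ t)
      ≤ ∫ t in Ioi x, (deriv ψ x)⁻¹ * (deriv ψ t * Real.exp (-ψ t)) := by
    refine setIntegral_mono_on hb.int.integrableOn (hIon.const_mul _) measurableSet_Ioi ?_
    intro t ht
    have hpt : deriv ψ x ≤ deriv ψ t := (hb.strictMono_dpsi ht).le
    rw [inv_mul_eq_div, le_div_iff₀ hpx]
    have := Real.exp_pos (-ψ t)
    nlinarith
  calc ∫ t in Ioi x, Real.exp (-ψ t)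
      ≤ ∫ t in Ioi x, (deriv ψ x)⁻¹ * (deriv ψ t * Real.exp (-ψ t)) := hmono
    _ = (deriv ψ x)⁻¹ * ∫ t in Ioi x, deriv ψ t * Real.exp (-ψ t) := integral_const_mul _ _
    _ ≤ (deriv ψ x)⁻¹ * Real.exp (-ψ x) := by
        exact mul_le_mul_of_nonneg_left htail (inv_nonneg.mpr hpx.le)
    _ = Real.exp (-ψ x) / deriv ψ x := by rw [div_eq_inv_mul]

def BB (ψ T : ℝ → ℝ) (x : ℝ) : ℝ := hh ψ T x ^ 2 * deriv ψ x * Real.exp (ψ x)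

lemma rhoexp (x : ℝ) : Real.exp (-ψ x) * Real.exp (ψ x) = 1 := by
  rw [← Real.exp_add, neg_add_cancel, Real.exp_zero]

lemma BB_tendsto_atTop (hb : Hyp ψ T) : Tendsto (BB ψ T) atTop (𝓝 0) := by
  obtain ⟨x0, h0⟩ := hb.exists_dpsi_pos
  have hG := tail_tendsto_zero hb.hT2
  refine tendsto_of_tendsto_of_tendsto_of_le_of_le' tendsto_const_nhds hG ?_ ?_
  · filter_upwards [eventually_ge_atTop x0] with x hx
    have hpx : 0 < deriv ψ x := lt_of_lt_of_le h0 (hb.strictMono_dpsi.monotone hx)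
    unfold BB
    positivity
  · filter_upwards [eventually_ge_atTop x0] with x hx
    have hpx : 0 < deriv ψ x := lt_of_lt_of_le h0 (hb.strictMono_dpsi.monotone hx)
    have hGx : (0:ℝ) ≤ ∫ t in Ioi x, T t ^ 2 * Real.exp (-ψ t) :=
      setIntegral_nonneg measurableSet_Ioi fun t _ => by positivity
    have h1 := hb.hh_sq_le x
    have h2 := hb.tail_rho_le h0 hx
    have hE : (0:ℝ) < deriv ψ x * Real.exp (ψ x) := by positivity
    calc BB ψ T x = hh ψ T x ^ 2 * (deriv ψ x * Real.exp (ψ x)) := by unfold BB; ring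
      _ ≤ ((∫ t in Ioi x, T t ^ 2 * Real.exp (-ψ t)) * ∫ t in Ioi x, Real.exp (-ψ t))
            * (deriv ψ x * Real.exp (ψ x)) := by
          exact mul_le_mul_of_nonneg_right h1 hE.le
      _ ≤ ((∫ t in Ioi x, T t ^ 2 * Real.exp (-ψ t)) * (Real.exp (-ψ x) / deriv ψ x))
            * (deriv ψ x * Real.exp (ψ x)) := by
          refine mul_le_mul_of_nonneg_right (mul_le_mul_of_nonneg_left h2 hGx) hE.le
      _ = (∫ t in Ioi x, T t ^ 2 * Real.exp (-ψ t))
            * (Real.exp (-ψ x) * Real.exp (ψ x)) := by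
          field_simp
      _ = ∫ t in Ioi x, T t ^ 2 * Real.exp (-ψ t) := by rw [rhoexp, mul_one]

/- reflection -/
lemma dcomp_neg (f : ℝ → ℝ) : deriv (fun y => f (-y)) = fun y => -deriv f (-y) :=
  funext fun y => deriv_comp_neg f y

lemma ddcomp_neg (f : ℝ → ℝ) (hf : Differentiable ℝ (deriv f)) :
    deriv (deriv (fun y => f (-y))) = fun y => deriv (deriv f) (-y) := by
  rw [dcomp_neg]
  funext y
  rw [deriv.fun_neg, deriv_comp_neg (deriv f) y, neg_neg]

lemma neg (hb : Hyp ψ T) : Hyp (fun x => ψ (-x)) (fun x => T (-x)) := by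
  have hdd := ddcomp_neg ψ hb.diff_dpsi
  have hdT := dcomp_neg T
  constructor
  · exact hb.smooth.comp contDiff_id.neg
  · intro x
    rw [hdd]
    exact hb.conv (-x)
  · exact hb.int.comp_neg
  · exact hb.hT.comp contDiff_id.neg
  · exact hb.hT2.comp_neg
  · have : (fun x => deriv (fun y => T (-y)) x ^ 2 / deriv (deriv fun y => ψ (-y)) x
        * Real.exp (-ψ (-x)))
        = fun x => deriv T (-x) ^ 2 / deriv (deriv ψ) (-x) * Real.exp (-ψ (-x)) := by
      funext x
      rw [hdd, hdT]
      ring_nf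
    rw [this]
    exact hb.hTd.comp_neg
  · have h := integral_neg_eq_self (fun y => T y * Real.exp (-ψ y)) (volume : Measure ℝ)
    exact h.trans hb.hT0

lemma hh_neg (hb : Hyp ψ T) (x : ℝ) :
    hh (fun y => ψ (-y)) (fun y => T (-y)) x = -hh ψ T (-x) := by
  unfold hh
  have h0 : (∫ t in Iic x, (fun y => T (-y)) t * Real.exp (-(fun y => ψ (-y)) t))
      = ∫ t in Iic x, (fun y => T y * Real.exp (-ψ y)) (-t) := rfl
  rw [h0, integral_comp_neg_Iic x (fun y => T y * Real.exp (-ψ y))]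
  have h1 := hb.hh_eq_neg_tail (-x)
  unfold hh at h1
  linarith

lemma BB_tendsto_atBot (hb : Hyp ψ T) : Tendsto (BB ψ T) atBot (𝓝 0) := by
  have hbn := hb.neg
  have heq : ∀ x : ℝ, BB (fun y => ψ (-y)) (fun y => T (-y)) x = -BB ψ T (-x) := by
    intro x
    unfold BB
    rw [hb.hh_neg, dcomp_neg ψ]
    ring
  have h1 := hbn.BB_tendsto_atTop
  rw [tendsto_congr heq] at h1
  have h2 : Tendsto (fun x : ℝ => BB ψ T (-x)) atTop (𝓝 0) := by
    have := h1.neg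
    simpa using this
  have h3 := h2.comp tendsto_neg_atBot_atTop
  refine h3.congr fun x => ?_
  simp

lemma hasDerivAt_BB (hb : Hyp ψ T) (x : ℝ) :
    HasDerivAt (BB ψ T)
      (2 * T x * hh ψ T x * deriv ψ x
        + deriv (deriv ψ) x * hh ψ T x ^ 2 * Real.exp (ψ x)
        + hh ψ T x ^ 2 * deriv ψ x ^ 2 * Real.exp (ψ x)) x := by
  have h1 := hb.hasDerivAt_hh x
  have hpow := h1.pow 2
  have h2 : HasDerivAt (deriv ψ) (deriv (deriv ψ) x) x := (hb.diff_dpsi x).hasDerivAt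
  have h3 : HasDerivAt (fun y => Real.exp (ψ y)) (Real.exp (ψ x) * deriv ψ x) x :=
    ((hb.diff_psi x).hasDerivAt).exp
  have hcomb := (hpow.mul h2).mul h3
  have hexp := rhoexp (ψ := ψ) x
  refine hcomb.congr_deriv ?_
  simp only [Pi.pow_apply, Pi.mul_apply]
  linear_combination (2 * T x * hh ψ T x * deriv ψ x) * hexp

def FF (ψ T : ℝ → ℝ) (x : ℝ) : ℝ := deriv (deriv ψ) x * hh ψ T x ^ 2 * Real.exp (ψ x)

lemma FF_identity (hb : Hyp ψ T) (x : ℝ) :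
    FF ψ T x = (2 * T x * hh ψ T x * deriv ψ x
        + deriv (deriv ψ) x * hh ψ T x ^ 2 * Real.exp (ψ x)
        + hh ψ T x ^ 2 * deriv ψ x ^ 2 * Real.exp (ψ x))
      + T x ^ 2 * Real.exp (-ψ x)
      - (T x + hh ψ T x * deriv ψ x * Real.exp (ψ x)) ^ 2 * Real.exp (-ψ x) := by
  have hexp := rhoexp (ψ := ψ) x
  unfold FF
  linear_combination (2 * T x * hh ψ T x * deriv ψ x
    + hh ψ T x ^ 2 * deriv ψ x ^ 2 * Real.exp (ψ x)) * hexp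

lemma cont_FF (hb : Hyp ψ T) : Continuous (FF ψ T) :=
  (hb.cont_ddpsi.mul (hb.cont_hh.pow 2)).mul hb.cont_erho

lemma FF_nonneg (hb : Hyp ψ T) (x : ℝ) : 0 ≤ FF ψ T x := by
  unfold FF
  have := hb.conv x
  positivity

lemma cont_BBd (hb : Hyp ψ T) : Continuous (fun x => 2 * T x * hh ψ T x * deriv ψ x
    + deriv (deriv ψ) x * hh ψ T x ^ 2 * Real.exp (ψ x)
    + hh ψ T x ^ 2 * deriv ψ x ^ 2 * Real.exp (ψ x)) := by
  refine Continuous.add (Continuous.add ?_ ?_) ?_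
  · exact ((continuous_const.mul hb.cont_T).mul hb.cont_hh).mul hb.cont_dpsi
  · exact (hb.cont_ddpsi.mul (hb.cont_hh.pow 2)).mul hb.cont_erho
  · exact ((hb.cont_hh.pow 2).mul (hb.cont_dpsi.pow 2)).mul hb.cont_erho

lemma cont_T2rho (hb : Hyp ψ T) : Continuous (fun x => T x ^ 2 * Real.exp (-ψ x)) :=
  (hb.cont_T.pow 2).mul hb.cont_rho

lemma cont_EE (hb : Hyp ψ T) : Continuous
    (fun x => (T x + hh ψ T x * deriv ψ x * Real.exp (ψ x)) ^ 2 * Real.exp (-ψ x)) :=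
  ((hb.cont_T.add ((hb.cont_hh.mul hb.cont_dpsi).mul hb.cont_erho)).pow 2).mul hb.cont_rho

lemma interval_FF_le (hb : Hyp ψ T) {a b : ℝ} (hab : a ≤ b) :
    ∫ x in a..b, FF ψ T x ≤ (∫ x, T x ^ 2 * Real.exp (-ψ x)) + BB ψ T b - BB ψ T a := by
  have h1 : ∫ x in a..b, (2 * T x * hh ψ T x * deriv ψ x
      + deriv (deriv ψ) x * hh ψ T x ^ 2 * Real.exp (ψ x)
      + hh ψ T x ^ 2 * deriv ψ x ^ 2 * Real.exp (ψ x)) = BB ψ T b - BB ψ T a :=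
    intervalIntegral.integral_eq_sub_of_hasDerivAt (fun x _ => hb.hasDerivAt_BB x)
      (hb.cont_BBd.intervalIntegrable a b)
  have h2 : ∫ x in a..b, FF ψ T x = ∫ x in a..b,
      ((2 * T x * hh ψ T x * deriv ψ x
      + deriv (deriv ψ) x * hh ψ T x ^ 2 * Real.exp (ψ x)
      + hh ψ T x ^ 2 * deriv ψ x ^ 2 * Real.exp (ψ x))
      + (T x ^ 2 * Real.exp (-ψ x)
      - (T x + hh ψ T x * deriv ψ x * Real.exp (ψ x)) ^ 2 * Real.exp (-ψ x))) :=
    intervalIntegral.integral_congr fun x _ => by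
      have := hb.FF_identity x
      linarith
  have h3 : ∫ x in a..b, ((2 * T x * hh ψ T x * deriv ψ x
      + deriv (deriv ψ) x * hh ψ T x ^ 2 * Real.exp (ψ x)
      + hh ψ T x ^ 2 * deriv ψ x ^ 2 * Real.exp (ψ x))
      + (T x ^ 2 * Real.exp (-ψ x)
      - (T x + hh ψ T x * deriv ψ x * Real.exp (ψ x)) ^ 2 * Real.exp (-ψ x)))
      = (BB ψ T b - BB ψ T a) + ∫ x in a..b, (T x ^ 2 * Real.exp (-ψ x)
      - (T x + hh ψ T x * deriv ψ x * Real.exp (ψ x)) ^ 2 * Real.exp (-ψ x)) := by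
    rw [intervalIntegral.integral_add (g := fun x => T x ^ 2 * Real.exp (-ψ x)
        - (T x + hh ψ T x * deriv ψ x * Real.exp (ψ x)) ^ 2 * Real.exp (-ψ x)) (hb.cont_BBd.intervalIntegrable a b)
      ((hb.cont_T2rho.sub hb.cont_EE).intervalIntegrable a b), h1]
  have h4 : ∫ x in a..b, (T x ^ 2 * Real.exp (-ψ x)
      - (T x + hh ψ T x * deriv ψ x * Real.exp (ψ x)) ^ 2 * Real.exp (-ψ x))
      ≤ ∫ x in a..b, T x ^ 2 * Real.exp (-ψ x) := by
    refine intervalIntegral.integral_mono_on hab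
      ((hb.cont_T2rho.sub hb.cont_EE).intervalIntegrable a b)
      (hb.cont_T2rho.intervalIntegrable a b) fun x _ => ?_
    have h5 : 0 ≤ (T x + hh ψ T x * deriv ψ x * Real.exp (ψ x)) ^ 2 * Real.exp (-ψ x) := by
      positivity
    linarith
  have h6 : ∫ x in a..b, T x ^ 2 * Real.exp (-ψ x) ≤ ∫ x, T x ^ 2 * Real.exp (-ψ x) := by
    rw [intervalIntegral.integral_of_le hab]
    exact setIntegral_le_integral hb.hT2 (Eventually.of_forall fun x => by positivity)
  rw [h2, h3]
  linarith

lemma integrable_FF (hb : Hyp ψ T) : Integrable (FF ψ T) := by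
  refine integrable_of_intervalIntegral_norm_bounded (l := atTop) (a := fun i : ℝ => -i)
    (b := fun i : ℝ => i) ((∫ x, T x ^ 2 * Real.exp (-ψ x)) + 1 + 1)
    (fun i => (hb.cont_FF.integrableOn_Ioc)) tendsto_neg_atTop_atBot tendsto_id ?_
  have e1 : ∀ᶠ i in atTop, BB ψ T i < 1 := hb.BB_tendsto_atTop.eventually_lt_const one_pos
  have e2 : ∀ᶠ i in atTop, -1 < BB ψ T (-i) := by
    have h := (hb.BB_tendsto_atBot.eventually_const_lt (show (-1:ℝ) < 0 by norm_num))
    exact tendsto_neg_atTop_atBot.eventually h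
  filter_upwards [e1, e2, eventually_ge_atTop (0:ℝ)] with i h1 h2 h3
  have hni : -i ≤ i := by linarith
  have heq : ∫ x in (-i)..i, ‖FF ψ T x‖ = ∫ x in (-i)..i, FF ψ T x :=
    intervalIntegral.integral_congr fun x _ => by
      rw [Real.norm_eq_abs, abs_of_nonneg (hb.FF_nonneg x)]
  rw [heq]
  have := hb.interval_FF_le hni
  linarith

lemma integral_FF_le (hb : Hyp ψ T) :
    ∫ x, FF ψ T x ≤ ∫ x, T x ^ 2 * Real.exp (-ψ x) := by
  have hlim : Tendsto (fun i : ℝ => ∫ x in (-i)..i, FF ψ T x) atTop (𝓝 (∫ x, FF ψ T x)) :=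
    intervalIntegral_tendsto_integral hb.integrable_FF tendsto_neg_atTop_atBot tendsto_id
  have hrhs : Tendsto (fun i : ℝ => (∫ x, T x ^ 2 * Real.exp (-ψ x)) + BB ψ T i - BB ψ T (-i))
      atTop (𝓝 ((∫ x, T x ^ 2 * Real.exp (-ψ x)) + 0 - 0)) := by
    exact ((tendsto_const_nhds.add hb.BB_tendsto_atTop).sub
      (hb.BB_tendsto_atBot.comp tendsto_neg_atTop_atBot))
  rw [add_zero, sub_zero] at hrhs
  refine le_of_tendsto_of_tendsto hlim hrhs ?_
  filter_upwards [eventually_ge_atTop (0:ℝ)] with i hi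
  exact hb.interval_FF_le (by linarith)

lemma integrable_dTh (hb : Hyp ψ T) : Integrable (fun x => deriv T x * hh ψ T x) := by
  refine Integrable.mono' ((hb.hTd.add hb.integrable_FF).const_mul (1/2 : ℝ))
    ((hb.cont_dT.mul hb.cont_hh).aestronglyMeasurable) ?_
  filter_upwards with x
  have hu : 0 < deriv (deriv ψ) x := hb.conv x
  have hr : 0 < Real.exp (-ψ x) := Real.exp_pos _
  have hE : 0 < Real.exp (ψ x) := Real.exp_pos _
  have hre := rhoexp (ψ := ψ) x
  set a' : ℝ := |deriv T x| * Real.sqrt (Real.exp (-ψ x) / deriv (deriv ψ) x) with ha'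
  set b' : ℝ := |hh ψ T x| * Real.sqrt (deriv (deriv ψ) x * Real.exp (ψ x)) with hb'
  have hsq1 : Real.sqrt (Real.exp (-ψ x) / deriv (deriv ψ) x) ^ 2
      = Real.exp (-ψ x) / deriv (deriv ψ) x := Real.sq_sqrt (by positivity)
  have hsq2 : Real.sqrt (deriv (deriv ψ) x * Real.exp (ψ x)) ^ 2
      = deriv (deriv ψ) x * Real.exp (ψ x) := Real.sq_sqrt (by positivity)
  have hprod : Real.sqrt (Real.exp (-ψ x) / deriv (deriv ψ) x)
      * Real.sqrt (deriv (deriv ψ) x * Real.exp (ψ x)) = 1 := by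
    rw [← Real.sqrt_mul (by positivity)]
    have : Real.exp (-ψ x) / deriv (deriv ψ) x * (deriv (deriv ψ) x * Real.exp (ψ x))
        = Real.exp (-ψ x) * Real.exp (ψ x) := by
      field_simp
    rw [this, hre, Real.sqrt_one]
  have habs : |deriv T x * hh ψ T x| = a' * b' := by
    rw [ha', hb', abs_mul]
    calc |deriv T x| * |hh ψ T x|
        = |deriv T x| * |hh ψ T x| * (Real.sqrt (Real.exp (-ψ x) / deriv (deriv ψ) x)
          * Real.sqrt (deriv (deriv ψ) x * Real.exp (ψ x))) := by rw [hprod, mul_one]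
      _ = |deriv T x| * Real.sqrt (Real.exp (-ψ x) / deriv (deriv ψ) x)
          * (|hh ψ T x| * Real.sqrt (deriv (deriv ψ) x * Real.exp (ψ x))) := by ring
  have hamg := two_mul_le_add_sq a' b'
  have ha2 : a' ^ 2 = deriv T x ^ 2 / deriv (deriv ψ) x * Real.exp (-ψ x) := by
    rw [ha', mul_pow, hsq1, sq_abs]
    ring
  have hb2 : b' ^ 2 = FF ψ T x := by
    rw [hb', mul_pow, hsq2, sq_abs]
    unfold FF
    ring
  have hfinal : ‖deriv T x * hh ψ T x‖ = |deriv T x * hh ψ T x| := Real.norm_eq_abs _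
  rw [hfinal, habs]
  simp only [Pi.add_apply]
  nlinarith [hamg, ha2, hb2]

lemma hasDerivAt_P (hb : Hyp ψ T) (x : ℝ) :
    HasDerivAt (fun y => T y * hh ψ T y)
      (deriv T x * hh ψ T x + T x * (T x * Real.exp (-ψ x))) x :=
  ((hb.diff_T x).hasDerivAt).mul (hb.hasDerivAt_hh x)

lemma integrable_Pd (hb : Hyp ψ T) :
    Integrable (fun x => deriv T x * hh ψ T x + T x * (T x * Real.exp (-ψ x))) :=
  hb.integrable_dTh.add (hb.hT2.congr (Eventually.of_forall fun x => by ring))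

lemma cont_Pd (hb : Hyp ψ T) :
    Continuous (fun x => deriv T x * hh ψ T x + T x * (T x * Real.exp (-ψ x))) :=
  (hb.cont_dT.mul hb.cont_hh).add (hb.cont_T.mul (hb.cont_T.mul hb.cont_rho))

lemma P_ftc (hb : Hyp ψ T) (y : ℝ) :
    ∫ t in (0:ℝ)..y, (deriv T t * hh ψ T t + T t * (T t * Real.exp (-ψ t)))
      = T y * hh ψ T y - T 0 * hh ψ T 0 :=
  intervalIntegral.integral_eq_sub_of_hasDerivAt (fun t _ => hb.hasDerivAt_P t)
    (hb.cont_Pd.intervalIntegrable 0 y)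

lemma W_pos (hb : Hyp ψ T) (x : ℝ) : 0 < ∫ t in Ioi x, Real.exp (-ψ t) := by
  rw [setIntegral_pos_iff_support_of_nonneg_ae
    (Eventually.of_forall fun t => (Real.exp_pos _).le) hb.int.integrableOn]
  have hsupp : (Function.support fun t => Real.exp (-ψ t)) = univ :=
    Set.eq_univ_iff_forall.mpr fun t => (Real.exp_pos _).ne'
  rw [hsupp, Set.univ_inter, Real.volume_Ioi]
  simp

lemma hasDerivAt_W (hb : Hyp ψ T) (x : ℝ) :
    HasDerivAt (fun y => ∫ t in Ioi y, Real.exp (-ψ t)) (-Real.exp (-ψ x)) x := by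
  have heq : ∀ y : ℝ, (∫ t in Ioi y, Real.exp (-ψ t))
      = (∫ t, Real.exp (-ψ t)) - ((∫ t in Iic (0:ℝ), Real.exp (-ψ t))
        + ∫ t in (0:ℝ)..y, Real.exp (-ψ t)) := by
    intro y
    have h1 := integral_add_compl (measurableSet_Iic (a := y)) hb.int
    rw [compl_Iic] at h1
    have h2 := intervalIntegral.integral_Iic_sub_Iic
      (hb.int.integrableOn (s := Iic (0:ℝ))) (hb.int.integrableOn (s := Iic y))
    linarith
  have hd : HasDerivAt (fun y => ∫ t in (0:ℝ)..y, Real.exp (-ψ t)) (Real.exp (-ψ x)) x := by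
    refine intervalIntegral.integral_hasDerivAt_right
      (hb.int.intervalIntegrable) ?_ hb.cont_rho.continuousAt
    exact hb.cont_rho.aestronglyMeasurable.stronglyMeasurableAtFilter
  have := ((hd.const_add (∫ t in Iic (0:ℝ), Real.exp (-ψ t))).const_sub
    (∫ t, Real.exp (-ψ t)))
  refine (this.congr_of_eventuallyEq ?_)
  filter_upwards with y using (heq y)

lemma cont_W (hb : Hyp ψ T) : Continuous (fun y => ∫ t in Ioi y, Real.exp (-ψ t)) :=
  continuous_iff_continuousAt.mpr fun x => (hb.hasDerivAt_W x).continuousAt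

lemma log_W_tendsto (hb : Hyp ψ T) :
    Tendsto (fun y => Real.log (∫ t in Ioi y, Real.exp (-ψ t))) atTop atBot := by
  have h1 : Tendsto (fun y => ∫ t in Ioi y, Real.exp (-ψ t)) atTop (𝓝[>] 0) := by
    refine tendsto_nhdsWithin_of_tendsto_nhds_of_eventually_within _
      (tail_tendsto_zero hb.int) ?_
    filter_upwards with y using hb.W_pos y
  exact Real.tendsto_log_nhdsGT_zero.comp h1

lemma Wlog_ftc (hb : Hyp ψ T) {x1 y : ℝ} (hy : x1 ≤ y) :
    ∫ x in x1..y, Real.exp (-ψ x) / (∫ t in Ioi x, Real.exp (-ψ t))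
      = Real.log (∫ t in Ioi x1, Real.exp (-ψ t))
        - Real.log (∫ t in Ioi y, Real.exp (-ψ t)) := by
  have hder : ∀ x : ℝ, HasDerivAt (fun y => -Real.log (∫ t in Ioi y, Real.exp (-ψ t)))
      (Real.exp (-ψ x) / (∫ t in Ioi x, Real.exp (-ψ t))) x := by
    intro x
    have h5 := ((hb.hasDerivAt_W x).log (hb.W_pos x).ne').fun_neg
    refine h5.congr_deriv ?_
    rw [neg_div, neg_neg]
  have hcont : Continuous (fun x => Real.exp (-ψ x) / (∫ t in Ioi x, Real.exp (-ψ t))) :=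
    hb.cont_rho.div hb.cont_W fun x => (hb.W_pos x).ne'
  have := intervalIntegral.integral_eq_sub_of_hasDerivAt (fun t _ => hder t)
    (hcont.intervalIntegrable x1 y)
  rw [this]
  ring

lemma P_tendsto_atTop (hb : Hyp ψ T) : Tendsto (fun x => T x * hh ψ T x) atTop (𝓝 0) := by
  have h1 := intervalIntegral_tendsto_integral_Ioi 0 hb.integrable_Pd.integrableOn tendsto_id
  have hPlim : Tendsto (fun x => T x * hh ψ T x) atTop
      (𝓝 (T 0 * hh ψ T 0 + ∫ t in Ioi 0, (deriv T t * hh ψ T t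
        + T t * (T t * Real.exp (-ψ t))))) := by
    refine ((tendsto_const_nhds.add h1).congr fun y => ?_)
    simp only [id_eq]
    rw [hb.P_ftc y]
    ring
  set L := T 0 * hh ψ T 0 + ∫ t in Ioi 0, (deriv T t * hh ψ T t
      + T t * (T t * Real.exp (-ψ t))) with hLdef
  suffices hL0 : L = 0 by rwa [hL0] at hPlim
  by_contra hL
  have hev : ∀ᶠ x in atTop, |L| / 2 < |T x * hh ψ T x| :=
    (hPlim.abs).eventually_const_lt (half_lt_self (abs_pos.mpr hL))
  obtain ⟨x1, hx1⟩ := eventually_atTop.mp hev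
  set G1 := ∫ t in Ioi x1, T t ^ 2 * Real.exp (-ψ t) with hG1def
  have hh1ne : hh ψ T x1 ≠ 0 := by
    intro h0
    have h2 := hx1 x1 le_rfl
    rw [h0, mul_zero, abs_zero] at h2
    have := abs_pos.mpr hL
    linarith
  have hG1pos : 0 < G1 := by
    have h2 := hb.hh_sq_le x1
    have h3 : 0 < hh ψ T x1 ^ 2 := by
      have := pow_pos (abs_pos.mpr hh1ne) 2
      rwa [sq_abs] at this
    nlinarith [hb.W_pos x1]
  have key : ∀ x, x1 ≤ x → L ^ 2 / 4 * (Real.exp (-ψ x) / (∫ t in Ioi x, Real.exp (-ψ t)))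
      ≤ G1 * (T x ^ 2 * Real.exp (-ψ x)) := by
    intro x hx
    have hr : (0:ℝ) < Real.exp (-ψ x) := Real.exp_pos _
    have hW := hb.W_pos x
    have hPx := hx1 x hx
    have hP2 : L ^ 2 / 4 ≤ T x ^ 2 * hh ψ T x ^ 2 := by
      have h4 := pow_le_pow_left₀ (by positivity) hPx.le 2
      rw [sq_abs, mul_pow] at h4
      have h5 : (|L| / 2) ^ 2 = L ^ 2 / 4 := by
        rw [div_pow, sq_abs]
        norm_num
      linarith
    have hGmono : (∫ t in Ioi x, T t ^ 2 * Real.exp (-ψ t)) ≤ G1 := by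
      refine setIntegral_mono_set hb.hT2.integrableOn
        (Eventually.of_forall fun t => by positivity) ?_
      exact HasSubset.Subset.eventuallyLE (Ioi_subset_Ioi hx)
    have hhsq : hh ψ T x ^ 2 ≤ G1 * (∫ t in Ioi x, Real.exp (-ψ t)) := by
      refine le_trans (hb.hh_sq_le x) ?_
      refine mul_le_mul_of_nonneg_right hGmono ?_
      exact setIntegral_nonneg measurableSet_Ioi fun t _ => (Real.exp_pos _).le
    rw [← mul_div_assoc, div_le_iff₀ hW]
    nlinarith [mul_le_mul_of_nonneg_right hP2 hr.le,
      mul_le_mul_of_nonneg_right hhsq (mul_nonneg (sq_nonneg (T x)) hr.le)]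
  have hbound2 : ∀ y, x1 ≤ y →
      L ^ 2 / 4 * (Real.log (∫ t in Ioi x1, Real.exp (-ψ t))
        - Real.log (∫ t in Ioi y, Real.exp (-ψ t)))
      ≤ G1 * ∫ x, T x ^ 2 * Real.exp (-ψ x) := by
    intro y hy
    have hWcont : Continuous (fun x => Real.exp (-ψ x) / (∫ t in Ioi x, Real.exp (-ψ t))) :=
      hb.cont_rho.div hb.cont_W fun x => (hb.W_pos x).ne'
    have hstep : ∫ x in x1..y, L ^ 2 / 4
        * (Real.exp (-ψ x) / (∫ t in Ioi x, Real.exp (-ψ t)))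
        ≤ ∫ x in x1..y, G1 * (T x ^ 2 * Real.exp (-ψ x)) := by
      refine intervalIntegral.integral_mono_on hy
        ((continuous_const.mul hWcont).intervalIntegrable x1 y)
        ((hb.hT2.const_mul G1).intervalIntegrable)
        fun x hx => key x hx.1
    rw [intervalIntegral.integral_const_mul, intervalIntegral.integral_const_mul,
      hb.Wlog_ftc hy] at hstep
    refine le_trans hstep ?_
    refine mul_le_mul_of_nonneg_left ?_ hG1pos.le
    rw [intervalIntegral.integral_of_le hy]
    exact setIntegral_le_integral hb.hT2 (Eventually.of_forall fun x => by positivity)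
  have hblow : Tendsto (fun y => L ^ 2 / 4
      * (Real.log (∫ t in Ioi x1, Real.exp (-ψ t))
        - Real.log (∫ t in Ioi y, Real.exp (-ψ t)))) atTop atTop := by
    have h6 : Tendsto (fun y => -Real.log (∫ t in Ioi y, Real.exp (-ψ t))) atTop atTop :=
      tendsto_neg_atBot_atTop.comp hb.log_W_tendsto
    have h7 := tendsto_atTop_add_const_left _
      (Real.log (∫ t in Ioi x1, Real.exp (-ψ t))) h6
    have h8 := Tendsto.const_mul_atTop (show (0:ℝ) < L ^ 2 / 4 by positivity) h7
    refine h8.congr fun y => ?_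
    ring
  obtain ⟨y, hy1, hy2⟩ := ((hblow.eventually_gt_atTop
    (G1 * ∫ x, T x ^ 2 * Real.exp (-ψ x))).and (eventually_ge_atTop x1)).exists
  exact absurd (hbound2 y hy2) (not_le.mpr hy1)

lemma P_tendsto_atBot (hb : Hyp ψ T) : Tendsto (fun x => T x * hh ψ T x) atBot (𝓝 0) := by
  have hbn := hb.neg
  have h1 := hbn.P_tendsto_atTop
  have heq : ∀ x : ℝ, T (-x) * hh (fun y => ψ (-y)) (fun y => T (-y)) x
      = -(T (-x) * hh ψ T (-x)) := by
    intro x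
    rw [hb.hh_neg]
    ring
  rw [tendsto_congr heq] at h1
  have h2 : Tendsto (fun x : ℝ => T (-x) * hh ψ T (-x)) atTop (𝓝 0) := by
    have := h1.neg
    simpa using this
  have h3 := h2.comp tendsto_neg_atBot_atTop
  refine h3.congr fun x => ?_
  simp

lemma ibp (hb : Hyp ψ T) :
    ∫ x, T x ^ 2 * Real.exp (-ψ x) = -∫ x, deriv T x * hh ψ T x := by
  have h0 : Tendsto (fun y : ℝ => T y * hh ψ T y - T (-y) * hh ψ T (-y)) atTop (𝓝 (0 - 0)) :=
    hb.P_tendsto_atTop.sub (hb.P_tendsto_atBot.comp tendsto_neg_atTop_atBot)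
  have hftc : ∀ y : ℝ, ∫ t in (-y)..y, (deriv T t * hh ψ T t + T t * (T t * Real.exp (-ψ t)))
      = T y * hh ψ T y - T (-y) * hh ψ T (-y) := fun y =>
    intervalIntegral.integral_eq_sub_of_hasDerivAt (fun t _ => hb.hasDerivAt_P t)
      (hb.cont_Pd.intervalIntegrable _ _)
  have h2 : Tendsto (fun y : ℝ => ∫ t in (-y)..y,
      (deriv T t * hh ψ T t + T t * (T t * Real.exp (-ψ t)))) atTop
      (𝓝 (∫ t, (deriv T t * hh ψ T t + T t * (T t * Real.exp (-ψ t))))) :=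
    intervalIntegral_tendsto_integral hb.integrable_Pd tendsto_neg_atTop_atBot tendsto_id
  have h3 : (∫ t, (deriv T t * hh ψ T t + T t * (T t * Real.exp (-ψ t)))) = 0 - 0 :=
    tendsto_nhds_unique h2 (h0.congr fun y => (hftc y).symm)
  have h4 : Integrable (fun t => T t * (T t * Real.exp (-ψ t))) :=
    hb.hT2.congr (Eventually.of_forall fun x => by ring)
  rw [integral_add hb.integrable_dTh h4] at h3
  have h5 : (∫ t, T t * (T t * Real.exp (-ψ t))) = ∫ t, T t ^ 2 * Real.exp (-ψ t) :=
    integral_congr_ae (Eventually.of_forall fun t => by ring)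
  linarith

theorem main (hb : Hyp ψ T) :
    ∫ x, T x ^ 2 * Real.exp (-ψ x) ≤
      ∫ x, deriv T x ^ 2 / deriv (deriv ψ) x * Real.exp (-ψ x) := by
  set V := ∫ x, T x ^ 2 * Real.exp (-ψ x) with hVdef
  set R := ∫ x, deriv T x ^ 2 / deriv (deriv ψ) x * Real.exp (-ψ x) with hRdef
  have hV0 : 0 ≤ V := integral_nonneg fun x => by positivity
  have hR0 : 0 ≤ R := integral_nonneg fun x => by
    have := hb.conv x
    positivity
  have hW0 : 0 ≤ ∫ x, FF ψ T x := integral_nonneg hb.FF_nonneg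
  have hWV : (∫ x, FF ψ T x) ≤ V := hb.integral_FF_le
  -- Cauchy-Schwarz step
  have hcs : (∫ x, deriv T x * hh ψ T x) ^ 2 ≤ R * ∫ x, FF ψ T x := by
    have hcf : Continuous (fun x => deriv T x
        * Real.sqrt (Real.exp (-ψ x) / deriv (deriv ψ) x)) :=
      hb.cont_dT.mul ((hb.cont_rho.div hb.cont_ddpsi fun x => (hb.conv x).ne').sqrt)
    have hcg : Continuous (fun x => hh ψ T x
        * Real.sqrt (deriv (deriv ψ) x * Real.exp (ψ x))) :=
      hb.cont_hh.mul ((hb.cont_ddpsi.mul hb.cont_erho).sqrt)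
    have e1 : (fun x => (deriv T x * Real.sqrt (Real.exp (-ψ x) / deriv (deriv ψ) x)) ^ 2)
        = fun x => deriv T x ^ 2 / deriv (deriv ψ) x * Real.exp (-ψ x) := by
      funext x
      have := hb.conv x
      rw [mul_pow, Real.sq_sqrt (by positivity : (0:ℝ) ≤ Real.exp (-ψ x) / deriv (deriv ψ) x)]
      ring
    have e2 : (fun x => (hh ψ T x * Real.sqrt (deriv (deriv ψ) x * Real.exp (ψ x))) ^ 2)
        = fun x => FF ψ T x := by
      funext x
      have := hb.conv x
      rw [mul_pow, Real.sq_sqrt (by positivity : (0:ℝ) ≤ deriv (deriv ψ) x * Real.exp (ψ x))]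
      unfold FF
      ring
    have e3 : ∀ x, (deriv T x * Real.sqrt (Real.exp (-ψ x) / deriv (deriv ψ) x))
        * (hh ψ T x * Real.sqrt (deriv (deriv ψ) x * Real.exp (ψ x)))
        = deriv T x * hh ψ T x := by
      intro x
      have hu := hb.conv x
      have hprod : Real.sqrt (Real.exp (-ψ x) / deriv (deriv ψ) x)
          * Real.sqrt (deriv (deriv ψ) x * Real.exp (ψ x)) = 1 := by
        rw [← Real.sqrt_mul (by positivity)]
        have heq : Real.exp (-ψ x) / deriv (deriv ψ) x * (deriv (deriv ψ) x * Real.exp (ψ x))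
            = Real.exp (-ψ x) * Real.exp (ψ x) := by
          field_simp
        rw [heq, rhoexp, Real.sqrt_one]
      calc (deriv T x * Real.sqrt (Real.exp (-ψ x) / deriv (deriv ψ) x))
          * (hh ψ T x * Real.sqrt (deriv (deriv ψ) x * Real.exp (ψ x)))
          = deriv T x * hh ψ T x * (Real.sqrt (Real.exp (-ψ x) / deriv (deriv ψ) x)
            * Real.sqrt (deriv (deriv ψ) x * Real.exp (ψ x))) := by ring
        _ = deriv T x * hh ψ T x := by rw [hprod, mul_one]
    have h := cauchy_schwarz (μ := volume)
      (f := fun x => deriv T x * Real.sqrt (Real.exp (-ψ x) / deriv (deriv ψ) x))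
      (g := fun x => hh ψ T x * Real.sqrt (deriv (deriv ψ) x * Real.exp (ψ x)))
      hcf.aestronglyMeasurable hcg.aestronglyMeasurable
      (by rw [e1]; exact hb.hTd) (by rw [e2]; exact hb.integrable_FF)
    rw [e1, e2] at h
    have h' : (∫ x, (fun x => deriv T x * Real.sqrt (Real.exp (-ψ x) / deriv (deriv ψ) x)) x
        * (fun x => hh ψ T x * Real.sqrt (deriv (deriv ψ) x * Real.exp (ψ x))) x)
        = ∫ x, deriv T x * hh ψ T x :=
      integral_congr_ae (Eventually.of_forall fun x => e3 x)
    rw [h'] at h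
    exact h
  have hibp := hb.ibp
  have hsq : V ^ 2 ≤ R * V := by
    have h1 : V ^ 2 = (∫ x, deriv T x * hh ψ T x) ^ 2 := by
      rw [hVdef, hibp]
      ring
    calc V ^ 2 = (∫ x, deriv T x * hh ψ T x) ^ 2 := h1
      _ ≤ R * ∫ x, FF ψ T x := hcs
      _ ≤ R * V := mul_le_mul_of_nonneg_left hWV hR0
  rcases eq_or_lt_of_le hV0 with h | h
  · rw [← h]
    exact hR0
  · nlinarith

end Hyp

end BL1D

open BL1D

/-- The probability measure on ℝ with density proportional to `exp (−ψ)`. -/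
def gibbs (ψ : ℝ → ℝ) : Measure ℝ :=
  ((volume.withDensity fun x => ENNReal.ofReal (Real.exp (-ψ x))) Set.univ)⁻¹ •
    (volume.withDensity fun x => ENNReal.ofReal (Real.exp (-ψ x)))

section Glue

variable {ψ : ℝ → ℝ}

lemma Z_pos (hc : Continuous ψ) (hint : Integrable fun x => Real.exp (-ψ x)) :
    0 < ∫ x, Real.exp (-ψ x) := by
  rw [integral_pos_iff_support_of_nonneg_ae
    (Eventually.of_forall fun t => (Real.exp_pos _).le) hint]
  have hsupp : (Function.support fun t => Real.exp (-ψ t)) = univ :=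
    Set.eq_univ_iff_forall.mpr fun t => (Real.exp_pos _).ne'
  rw [hsupp]
  simp [Real.volume_univ]

lemma gibbs_total (hc : Continuous ψ) (hint : Integrable fun x => Real.exp (-ψ x)) :
    ((volume.withDensity fun x => ENNReal.ofReal (Real.exp (-ψ x))) Set.univ)
      = ENNReal.ofReal (∫ x, Real.exp (-ψ x)) := by
  rw [withDensity_apply _ MeasurableSet.univ, Measure.restrict_univ,
    ← ofReal_integral_eq_lintegral_ofReal hint
      (Eventually.of_forall fun t => (Real.exp_pos _).le)]

lemma integral_gibbs (hc : Continuous ψ) (hint : Integrable fun x => Real.exp (-ψ x))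
    (f : ℝ → ℝ) :
    ∫ x, f x ∂(gibbs ψ) = (∫ x, Real.exp (-ψ x))⁻¹ * ∫ x, f x * Real.exp (-ψ x) := by
  unfold gibbs
  rw [integral_smul_measure, gibbs_total hc hint]
  have hZnn : 0 ≤ ∫ x, Real.exp (-ψ x) := integral_nonneg fun x => (Real.exp_pos _).le
  have htoReal : ((ENNReal.ofReal (∫ x, Real.exp (-ψ x)))⁻¹).toReal
      = (∫ x, Real.exp (-ψ x))⁻¹ := by
    rw [ENNReal.toReal_inv, ENNReal.toReal_ofReal hZnn]
  rw [htoReal]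
  have hdens : (fun x => ENNReal.ofReal (Real.exp (-ψ x)))
      = fun x => ((Real.toNNReal (Real.exp (-ψ x)) : ℝ≥0) : ℝ≥0∞) := rfl
  have hmeas : AEMeasurable (fun x => Real.toNNReal (Real.exp (-ψ x))) (volume : Measure ℝ) :=
    (continuous_real_toNNReal.comp hc.neg.rexp).aemeasurable
  rw [hdens, integral_withDensity_eq_integral_smul₀ hmeas f]
  have : ∀ x, Real.toNNReal (Real.exp (-ψ x)) • f x = f x * Real.exp (-ψ x) := by
    intro x
    rw [NNReal.smul_def, Real.coe_toNNReal _ (Real.exp_pos _).le, smul_eq_mul]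
    ring
  rw [integral_congr_ae (Eventually.of_forall this)]
  simp [smul_eq_mul]

lemma gibbs_prob (hc : Continuous ψ) (hint : Integrable fun x => Real.exp (-ψ x)) :
    IsProbabilityMeasure (gibbs ψ) := by
  constructor
  unfold gibbs
  rw [Measure.smul_apply, smul_eq_mul, ENNReal.inv_mul_cancel]
  · rw [gibbs_total hc hint]
    simp only [ne_eq, ENNReal.ofReal_eq_zero, not_le]
    exact Z_pos hc hint
  · rw [gibbs_total hc hint]
    exact ENNReal.ofReal_ne_top

lemma integrable_gibbs_iff (hc : Continuous ψ) (hint : Integrable fun x => Real.exp (-ψ x))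
    (f : ℝ → ℝ) :
    Integrable f (gibbs ψ) ↔ Integrable (fun x => f x * Real.exp (-ψ x)) volume := by
  unfold gibbs
  rw [integrable_smul_measure, integrable_withDensity_iff]
  · exact integrable_congr (Eventually.of_forall fun x => by
      simp only [ENNReal.toReal_ofReal (Real.exp_pos (-ψ x)).le])
  · exact ENNReal.measurable_ofReal.comp (hc.neg.rexp.measurable)
  · filter_upwards with x using ENNReal.ofReal_lt_top
  · rw [gibbs_total hc hint]
    simp only [ne_eq, ENNReal.inv_eq_zero]
    exact ENNReal.ofReal_ne_top
  · rw [gibbs_total hc hint]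
    simp only [ne_eq, ENNReal.inv_eq_top, ENNReal.ofReal_eq_zero, not_le]
    exact Z_pos hc hint

end Glue

/-- one-dimensional Brascamp–Lieb inequality: if `ψ` is C² with
`ψ'' > 0` everywhere and `exp (−ψ)` integrable, `p ∝ exp (−ψ)`, then for every C¹
function `S` square-integrable w.r.t. `p` with `S'²/ψ''` `p`-integrable,
`Var_p(S) ≤ E_p[S'²/ψ'']`. -/
theorem brascamp_lieb_one_dim
    (ψ : ℝ → ℝ) (hψ : ContDiff ℝ 2 ψ)
    (hconv : ∀ x, 0 < iteratedDeriv 2 ψ x)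
    (hint : Integrable fun x => Real.exp (-ψ x))
    (S : ℝ → ℝ) (hS : ContDiff ℝ 1 S)
    (hS2 : MemLp S 2 (gibbs ψ))
    (hSd : Integrable (fun x => (deriv S x) ^ 2 / iteratedDeriv 2 ψ x) (gibbs ψ)) :
    (∫ x, (S x) ^ 2 ∂(gibbs ψ)) - (∫ x, S x ∂(gibbs ψ)) ^ 2 ≤
      ∫ x, (deriv S x) ^ 2 / iteratedDeriv 2 ψ x ∂(gibbs ψ) := by
  have hcψ : Continuous ψ := hψ.continuous
  have hdd : iteratedDeriv 2 ψ = deriv (deriv ψ) := by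
    have h2 : (2 : ℕ) = 1 + 1 := rfl
    rw [h2, iteratedDeriv_succ, iteratedDeriv_one]
  rw [hdd] at hconv hSd ⊢
  haveI hprob : IsProbabilityMeasure (gibbs ψ) := gibbs_prob hcψ hint
  have hZpos : 0 < ∫ x, Real.exp (-ψ x) := Z_pos hcψ hint
  have hSint : Integrable S (gibbs ψ) := hS2.integrable one_le_two
  set m := ∫ x, S x ∂(gibbs ψ) with hm
  set T := fun x => S x - m with hT
  have hTmem : MemLp T 2 (gibbs ψ) := hS2.sub (memLp_const m)
  have hT2int_p : Integrable (fun x => T x ^ 2) (gibbs ψ) := hTmem.integrable_sq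
  have hderivT : deriv T = deriv S := funext fun x => deriv_sub_const m
  have hTp0 : ∫ x, T x ∂(gibbs ψ) = 0 := by
    rw [hT]
    rw [integral_sub hSint (integrable_const m)]
    simp [hm]
  have hyp : BL1D.Hyp ψ T := by
    constructor
    · exact hψ
    · exact hconv
    · exact hint
    · exact hS.sub contDiff_const
    · exact (integrable_gibbs_iff hcψ hint _).mp hT2int_p
    · rw [hderivT]
      exact (integrable_gibbs_iff hcψ hint _).mp hSd
    · have h1 := integral_gibbs hcψ hint T
      rw [hTp0] at h1
      have h2 := h1.symm
      rcases mul_eq_zero.mp h2 with h | h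
      · exact absurd h (by positivity)
      · exact h
  have hmain := BL1D.Hyp.main hyp
  rw [hderivT] at hmain
  have hLHS : (∫ x, S x ^ 2 ∂(gibbs ψ)) - m ^ 2 = ∫ x, T x ^ 2 ∂(gibbs ψ) := by
    have he : ∀ x, T x ^ 2 = S x ^ 2 - (2 * m * S x - m ^ 2) := by
      intro x
      rw [hT]
      ring
    have i1 : Integrable (fun x => 2 * m * S x - m ^ 2) (gibbs ψ) :=
      (hSint.const_mul (2 * m)).sub (integrable_const (m ^ 2))
    have i2 : Integrable (fun x => 2 * m * S x) (gibbs ψ) := hSint.const_mul (2 * m)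
    rw [integral_congr_ae (Eventually.of_forall he),
      integral_sub hS2.integrable_sq i1,
      integral_sub i2 (integrable_const (m ^ 2)),
      integral_const_mul, integral_const]
    simp [hm]
    ring
  rw [hLHS]
  have h3 := integral_gibbs hcψ hint (fun x => T x ^ 2)
  have h4 := integral_gibbs hcψ hint (fun x => deriv S x ^ 2 / deriv (deriv ψ) x)
  rw [h3, h4]
  exact mul_le_mul_of_nonneg_left hmain (inv_nonneg.mpr hZpos.le)
end
end
end

section
/- (Existence of a mode near an approximate critical point.) Let ψ : ℝ → ℝ be three times continuously differentiable with |ψ'''(x)| ≤ M for all x, and let x0 ∈ ℝ be such that A := ψ''(x0) > 0 and A² ≥ 2M·|ψ'(x0)|. Then there exists x⋆ ∈ ℝ with ψ'(x⋆) = 0 and |x⋆ − x0| ≤ 2|ψ'(x0)|/A. -/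
lemma iterWithin_eq {n m : ℕ} {f : ℝ → ℝ} (hf : ContDiff ℝ n f) (hmn : m ≤ n)
    {s : Set ℝ} (hs : UniqueDiffOn ℝ s) {x : ℝ} (hx : x ∈ s) :
    iteratedDerivWithin m f s x = iteratedDeriv m f x := by
  rw [iteratedDerivWithin_eq_iteratedFDerivWithin, iteratedDeriv_eq_iteratedFDeriv]
  congr 1
  exact (((contDiff_iff_ftaylorSeries.mp hf).hasFTaylorSeriesUpToOn s).eq_iteratedFDerivWithin_of_uniqueDiffOn (mod_cast hmn) hs hx).symm

lemma quad_right {g : ℝ → ℝ} {M : ℝ} (hg : ContDiff ℝ 2 g)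
    (hM : ∀ x, |iteratedDeriv 2 g x| ≤ M) {a y : ℝ} (hay : a ≤ y) :
    |g y - g a - deriv g a * (y - a)| ≤ M / 2 * (y - a) ^ 2 := by
  rcases eq_or_lt_of_le hay with rfl | h
  · simpa using mul_nonneg (by positivity : (0:ℝ) ≤ M/2) (sq_nonneg (0:ℝ))
  have hf : ContDiffOn ℝ 1 g (Set.Icc a y) := (hg.of_le (by norm_num)).contDiffOn
  have hud := uniqueDiffOn_Icc h
  have heq : ∀ x ∈ Set.Icc a y, iteratedDerivWithin 1 g (Set.Icc a y) x = deriv g x := by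
    intro x hx
    rw [iterWithin_eq hg (by norm_num) hud hx, iteratedDeriv_one]
  have hg2 : ContDiff ℝ ((1:ℕ)+1) g := by exact_mod_cast hg
  have hdg : ContDiff ℝ 1 (deriv g) := (contDiff_succ_iff_deriv.mp hg2).2.2
  have hf' : DifferentiableOn ℝ (iteratedDerivWithin 1 g (Set.Icc a y)) (Set.Ioo a y) := by
    apply ((hdg.differentiable (by norm_num)).differentiableOn).congr
    exact fun x hx => heq x (Set.Ioo_subset_Icc_self hx)
  obtain ⟨x', hx', hval⟩ := taylor_mean_remainder_lagrange (n := 1) h.ne (by rwa [Set.uIcc_of_le hay]) (by rwa [Set.uIcc_of_le hay, Set.uIoo_of_le hay])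
  rw [Set.uIcc_of_le hay] at hval
  rw [Set.uIoo_of_le hay] at hx'
  norm_num at hval
  have h2 : iteratedDerivWithin 2 g (Set.Icc a y) x'
      = iteratedDeriv 2 g x' := iterWithin_eq hg le_rfl hud (Set.Ioo_subset_Icc_self hx')
  rw [← iteratedDerivWithin_one, heq a (Set.left_mem_Icc.mpr hay), h2] at hval
  have : g y - g a - deriv g a * (y - a) = iteratedDeriv 2 g x' * (y - a)^2 / 2 := by
    linarith [hval]
  rw [this, abs_div, abs_mul, abs_pow, sq_abs, abs_two,
    div_le_iff₀ (by norm_num : (0:ℝ) < 2)]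
  nlinarith [hM x', sq_nonneg (y - a)]

lemma quad_both {g : ℝ → ℝ} {M : ℝ} (hg : ContDiff ℝ 2 g)
    (hM : ∀ x, |iteratedDeriv 2 g x| ≤ M) (a y : ℝ) :
    |g y - g a - deriv g a * (y - a)| ≤ M / 2 * (y - a) ^ 2 := by
  rcases le_total a y with hay | hya
  · exact quad_right hg hM hay
  · -- reflect: h t = g (2a - t)
    set h : ℝ → ℝ := fun t => g (2 * a + -t) with hh
    have hiter : ∀ n : ℕ, ∀ t : ℝ, iteratedDeriv n h t = (-1:ℝ)^n • iteratedDeriv n g (2*a - t) := by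
      intro n t
      have := iteratedDeriv_comp_neg n (fun z => g (2 * a + z)) t
      rw [hh]
      rw [this, iteratedDeriv_comp_const_add n g (2*a)]
      norm_num [sub_eq_add_neg]
    have hgc : ContDiff ℝ 2 h := by
      apply hg.comp
      fun_prop
    have hMh : ∀ x, |iteratedDeriv 2 h x| ≤ M := by
      intro x
      rw [hiter 2 x]
      simpa using hM (2*a - x)
    have key := quad_right hgc hMh (a := a) (y := 2*a - y) (by linarith)
    have h1 : h (2*a - y) = g y := by simp only [hh]; norm_num
    have h2 : h a = g a := by simp only [hh]; norm_num [two_mul]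
    have h3 : deriv h a = -deriv g a := by
      have := hiter 1 a
      rw [show 2*a - a = a by ring] at this
      simpa [iteratedDeriv_one] using this
    rw [h1, h2, h3] at key
    calc |g y - g a - deriv g a * (y - a)|
        = |g y - g a - -deriv g a * (2*a - y - a)| := by ring_nf
      _ ≤ M / 2 * (2*a - y - a)^2 := key
      _ = M / 2 * (y - a)^2 := by ring



/-- existence of a mode near an approximate critical point:
if `ψ` is C³ with `|ψ'''| ≤ M`, `A := ψ''(x0) > 0` and `A² ≥ 2M·|ψ'(x0)|`, then
there is `x⋆` with `ψ'(x⋆) = 0` and `|x⋆ − x0| ≤ 2|ψ'(x0)|/A`. -/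
theorem mode_near_approximate_critical_point
    (ψ : ℝ → ℝ) (M : ℝ) (hψ : ContDiff ℝ 3 ψ)
    (hM : ∀ x, |iteratedDeriv 3 ψ x| ≤ M)
    (x0 : ℝ) (hA : 0 < iteratedDeriv 2 ψ x0)
    (hdisc : 2 * M * |deriv ψ x0| ≤ (iteratedDeriv 2 ψ x0) ^ 2) :
    ∃ xstar : ℝ, deriv ψ xstar = 0 ∧
      |xstar - x0| ≤ 2 * |deriv ψ x0| / iteratedDeriv 2 ψ x0 := by
  set g := deriv ψ with hgdef
  have hψ2 : ContDiff ℝ ((2:ℕ)+1) ψ := by exact_mod_cast hψ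
  have hg : ContDiff ℝ 2 g := (contDiff_succ_iff_deriv.mp hψ2).2.2
  have h2eq : iteratedDeriv 2 ψ = deriv g := by
    rw [iteratedDeriv_succ, iteratedDeriv_one]
  have h3eq : iteratedDeriv 3 ψ = iteratedDeriv 2 g := by
    rw [show (3:ℕ) = 2 + 1 from rfl, iteratedDeriv_succ']
  have hM' : ∀ x, |iteratedDeriv 2 g x| ≤ M := by
    intro x; rw [← h3eq]; exact hM x
  set A := iteratedDeriv 2 ψ x0 with hAdef
  have hAg : deriv g x0 = A := by rw [hAdef, h2eq]
  set b := g x0 with hbdef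
  set r := 2 * |b| / A with hrdef
  have hr0 : 0 ≤ r := by positivity
  have hAr : A * r = 2 * |b| := by
    rw [hrdef]; field_simp
  have hkey : M / 2 * r ^ 2 ≤ |b| := by
    have hMnn : 0 ≤ M := le_trans (abs_nonneg _) (hM' x0)
    rw [← mul_le_mul_iff_left₀ (by positivity : (0:ℝ) < A^2)]
    have he : M/2*r^2*A^2 = M/2*(A*r)^2 := by ring
    rw [he, hAr]
    nlinarith [abs_nonneg b, hdisc]
  have hcont : ContinuousOn g (Set.Icc (x0 - r) (x0 + r)) :=
    (hg.continuous).continuousOn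
  rcases lt_trichotomy b 0 with hb | hb | hb
  · -- b < 0 : look right
    have habs : |b| = -b := abs_of_neg hb
    have hq := quad_both hg hM' x0 (x0 + r)
    rw [hAg, ← hbdef] at hq
    have hgy : 0 ≤ g (x0 + r) := by
      have h1 : |g (x0 + r) - b - A * (x0 + r - x0)| ≤ M / 2 * (x0 + r - x0) ^ 2 := hq
      rw [show x0 + r - x0 = r by ring] at h1
      have := abs_le.mp h1
      nlinarith [hkey]
    have hiv := intermediate_value_Icc (by linarith : x0 ≤ x0 + r)
      ((hg.continuous).continuousOn)
    have h0mem : (0:ℝ) ∈ Set.Icc (g x0) (g (x0 + r)) := ⟨le_of_lt hb, hgy⟩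
    obtain ⟨c, hc, hgc⟩ := hiv h0mem
    exact ⟨c, hgc, by rw [abs_le]; constructor <;> [linarith [hc.1]; linarith [hc.2]]⟩
  · exact ⟨x0, hb, by simpa using hr0⟩
  · -- b > 0 : look left
    have habs : |b| = b := abs_of_pos hb
    have hq := quad_both hg hM' x0 (x0 - r)
    rw [hAg, ← hbdef] at hq
    have hgy : g (x0 - r) ≤ 0 := by
      have h1 : |g (x0 - r) - b - A * (x0 - r - x0)| ≤ M / 2 * (x0 - r - x0) ^ 2 := hq
      rw [show x0 - r - x0 = -r by ring] at h1
      have h2 : M / 2 * (-r)^2 = M / 2 * r^2 := by ring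
      rw [h2] at h1
      have := abs_le.mp h1
      nlinarith [hkey]
    have hiv := intermediate_value_Icc (by linarith : x0 - r ≤ x0)
      ((hg.continuous).continuousOn)
    have h0mem : (0:ℝ) ∈ Set.Icc (g (x0 - r)) (g x0) := ⟨hgy, le_of_lt hb⟩
    obtain ⟨c, hc, hgc⟩ := hiv h0mem
    exact ⟨c, hgc, by rw [abs_le]; constructor <;> [linarith [hc.1]; linarith [hc.2]]⟩
end
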